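/- Let f : ℝⁿ → ℝᵏ be linear with (1−ε)‖u−v‖² ≤ ‖f(u)−f(v)‖² ≤ (1+ε)‖u−v‖² for all u, v in a set Q containing 0, with ε ∈ (0,1/2). Then for all u, v ∈ Q, |⟨f(u), f(v)⟩ − ⟨u,v⟩| ≤ (3ε/2)·(‖u‖² + ‖v‖²); i.e., approximate distance preservation on Q ∪ {0} implies approximate inner-product preservation. -/

import Mathlib

/-- Approximate distance preservation on a set containing 0 by a linear map
implies approximate inner-product preservation. -/
theorem dist_preservation_implies_inner_preservation (n k : ℕ)
    (f : EuclideanSpace ℝ (Fin n) →ₗ[ℝ] EuclideanSpace ℝ (Fin k))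
    (Q : Set (EuclideanSpace ℝ (Fin n))) (h0 : (0 : EuclideanSpace ℝ (Fin n)) ∈ Q)
    (ε : ℝ) (hε : ε ∈ Set.Ioo (0 : ℝ) (1/2))
    (hf : ∀ u ∈ Q, ∀ v ∈ Q,
      (1 - ε) * ‖u - v‖ ^ 2 ≤ ‖f u - f v‖ ^ 2 ∧
      ‖f u - f v‖ ^ 2 ≤ (1 + ε) * ‖u - v‖ ^ 2) :
    ∀ u ∈ Q, ∀ v ∈ Q,
      |(inner ℝ (f u) (f v) : ℝ) - (inner ℝ u v : ℝ)| ≤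
        (3 * ε / 2) * (‖u‖ ^ 2 + ‖v‖ ^ 2) := by
  intro u hu v hv
  have h1 := hf u hu 0 h0
  have h2 := hf v hv 0 h0
  have h3 := hf u hu v hv
  simp only [map_zero, sub_zero] at h1 h2
  have pf : ‖f u - f v‖ ^ 2 = ‖f u‖ ^ 2 - 2 * inner ℝ (f u) (f v) + ‖f v‖ ^ 2 :=
    norm_sub_sq_real (f u) (f v)
  have p : ‖u - v‖ ^ 2 = ‖u‖ ^ 2 - 2 * inner ℝ u v + ‖v‖ ^ 2 :=
    norm_sub_sq_real u v
  have huv : ‖u - v‖ ^ 2 ≤ 2 * (‖u‖ ^ 2 + ‖v‖ ^ 2) := by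
    have h := pow_le_pow_left₀ (norm_nonneg (u - v)) (norm_sub_le u v) 2
    nlinarith [sq_nonneg (‖u‖ - ‖v‖)]
  have hnn : (0:ℝ) ≤ ‖u - v‖ ^ 2 := sq_nonneg _
  obtain ⟨hε0, hε1⟩ := hε
  rw [abs_le]
  constructor <;> nlinarith [h1.1, h1.2, h2.1, h2.2, h3.1, h3.2, sq_nonneg ‖u‖, sq_nonneg ‖v‖]
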